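/- arXiv:2303.13264 — 2 statements merged into one kernel-verified Lean document; each statement's English description precedes it below -/
import Mathlib

section
/- (Converse direction of the isometry lemma) If V ∈ C^{N×K} has full column rank and V^H V is not a positive multiple of the identity, then there exist nonzero b₁, b₂ ∈ C^K with d(Vb₁, Vb₂) ≠ d(b₁, b₂). Specifically: if (V^H V)_{ij} ≠ 0 for some i ≠ j then d(e_i, e_j) = 1 but d(Ve_i, Ve_j) < 1; if V^H V is diagonal with (V^H V)_{ii} ≠ (V^H V)_{jj}, then d(e_i, (e_i+e_j)/√2) ≠ d(Ve_i, V(e_i+e_j)/√2). -/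
open Matrix

/-- Squared Euclidean norm of a complex vector. -/
noncomputable def nsq {n : ℕ} (x : Fin n → ℂ) : ℝ := (star x ⬝ᵥ x).re

/-- Squared chordal distance between two (nonzero) complex vectors. -/
noncomputable def chordalSq {n : ℕ} (x y : Fin n → ℂ) : ℝ :=
  1 - (‖star x ⬝ᵥ y‖) ^ 2 / (nsq x * nsq y)

/-- Standard basis vector of `ℂ^K`. -/
noncomputable def stdBasis {K : ℕ} (i : Fin K) : Fin K → ℂ := Pi.single i 1



lemma nsq_eq {n : ℕ} (x : Fin n → ℂ) : nsq x = ∑ k, Complex.normSq (x k) := by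
  simp [nsq, dotProduct, Complex.normSq_apply]

lemma star_dot_self {n : ℕ} (x : Fin n → ℂ) : star x ⬝ᵥ x = ((nsq x : ℝ) : ℂ) := by
  rw [nsq_eq]
  push_cast
  simp [dotProduct, Complex.normSq_eq_conj_mul_self]

lemma nsq_pos {n : ℕ} (x : Fin n → ℂ) (hx : x ≠ 0) : 0 < nsq x := by
  rw [nsq_eq]
  obtain ⟨k, hk⟩ := Function.ne_iff.mp hx
  exact Finset.sum_pos' (fun i _ => Complex.normSq_nonneg _)
    ⟨k, Finset.mem_univ k, Complex.normSq_pos.mpr hk⟩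

lemma key {N K : ℕ} (V : Matrix (Fin N) (Fin K) ℂ) (x y : Fin K → ℂ) :
    star (V.mulVec x) ⬝ᵥ V.mulVec y = star x ⬝ᵥ (Vᴴ * V).mulVec y := by
  rw [star_mulVec, ← Matrix.dotProduct_mulVec, Matrix.mulVec_mulVec]

lemma inj {N K : ℕ} (V : Matrix (Fin N) (Fin K) ℂ) (hrank : V.rank = K)
    (b : Fin K → ℂ) (hb : b ≠ 0) : V.mulVec b ≠ 0 := by
  have h1 := LinearMap.finrank_range_add_finrank_ker V.mulVecLin
  rw [show Module.finrank ℂ (LinearMap.range V.mulVecLin) = V.rank from rfl, hrank] at h1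
  simp [Module.finrank_fintype_fun_eq_card] at h1
  exact fun h => hb (Matrix.ker_mulVecLin_eq_bot_iff.mp h1 b h)


lemma star_std {K : ℕ} (i : Fin K) : star (stdBasis i) = stdBasis i := by
  ext k
  simp [_root_.stdBasis, Pi.single_apply, apply_ite]

lemma std_dot {K : ℕ} (i : Fin K) (w : Fin K → ℂ) : stdBasis i ⬝ᵥ w = w i := by
  simp [_root_.stdBasis]

lemma mulVec_std {K : ℕ} (M : Matrix (Fin K) (Fin K) ℂ) (j : Fin K) (i : Fin K) :
    M.mulVec (stdBasis j) i = M i j := by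
  simp [_root_.stdBasis, Matrix.mulVec_single]

lemma nsq_std {K : ℕ} (i : Fin K) : nsq (stdBasis i) = 1 := by
  have := star_dot_self (stdBasis i)
  rw [star_std, std_dot] at this
  have : ((nsq (stdBasis i) : ℝ) : ℂ) = 1 := by rw [← this]; simp [_root_.stdBasis]
  exact_mod_cast this

lemma std_ne {K : ℕ} (i : Fin K) : stdBasis i ≠ 0 := by
  intro h
  have := congrFun h i
  simp [_root_.stdBasis] at this


lemma dot_V_std {N K : ℕ} (V : Matrix (Fin N) (Fin K) ℂ) (i j : Fin K) :
    star (V.mulVec (stdBasis i)) ⬝ᵥ V.mulVec (stdBasis j) = (Vᴴ * V) i j := by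
  rw [key, star_std, std_dot, mulVec_std]

lemma nsq_V_std {N K : ℕ} (V : Matrix (Fin N) (Fin K) ℂ) (i : Fin K) :
    nsq (V.mulVec (stdBasis i)) = ((Vᴴ * V) i i).re := by
  rw [nsq, dot_V_std]

lemma G_diag_real {N K : ℕ} (V : Matrix (Fin N) (Fin K) ℂ) (i : Fin K) :
    (Vᴴ * V) i i = ((nsq (V.mulVec (stdBasis i)) : ℝ) : ℂ) := by
  rw [← dot_V_std, star_dot_self]

lemma std_dot_std {K : ℕ} {i j : Fin K} (h : i ≠ j) :
    star (stdBasis i) ⬝ᵥ stdBasis j = 0 := by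
  rw [star_std, std_dot]
  simp [_root_.stdBasis, Pi.single_apply, h.symm]

lemma chordal_std_std {K : ℕ} {i j : Fin K} (h : i ≠ j) :
    chordalSq (stdBasis i) (stdBasis j) = 1 := by
  rw [chordalSq, std_dot_std h]
  simp

lemma part2 {N K : ℕ} (V : Matrix (Fin N) (Fin K) ℂ) (hrank : V.rank = K)
    (i j : Fin K) (hG : (Vᴴ * V) i j ≠ 0) :
    chordalSq (V.mulVec (stdBasis i)) (V.mulVec (stdBasis j)) < 1 := by
  rw [chordalSq, dot_V_std, nsq_V_std, nsq_V_std]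
  have hi : 0 < ((Vᴴ*V) i i).re := by
    rw [← nsq_V_std]; exact nsq_pos _ (inj V hrank _ (std_ne i))
  have hj : 0 < ((Vᴴ*V) j j).re := by
    rw [← nsq_V_std]; exact nsq_pos _ (inj V hrank _ (std_ne j))
  have habs : 0 < ‖(Vᴴ*V) i j‖ ^ 2 :=
    pow_pos (norm_pos_iff.mpr hG) 2
  have := div_pos habs (mul_pos hi hj)
  linarith

lemma s_facts : (((Real.sqrt 2 : ℝ) : ℂ))⁻¹ = ((((Real.sqrt 2)⁻¹ : ℝ)) : ℂ) := by
  simp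

lemma normSq_s : Complex.normSq (((Real.sqrt 2 : ℝ) : ℂ))⁻¹ = 1/2 := by
  rw [s_facts, Complex.normSq_ofReal]
  rw [← mul_inv, Real.mul_self_sqrt (by norm_num)]
  norm_num

lemma nsq_smul {n : ℕ} (c : ℂ) (x : Fin n → ℂ) :
    nsq (c • x) = Complex.normSq c * nsq x := by
  simp [nsq_eq, Complex.normSq_mul, Finset.mul_sum]

lemma part3 {N K : ℕ} (V : Matrix (Fin N) (Fin K) ℂ) (hrank : V.rank = K)
    (i j : Fin K) (hij : i ≠ j) (hdiag : (Vᴴ * V).IsDiag)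
    (hne : (Vᴴ * V) i i ≠ (Vᴴ * V) j j) :
    chordalSq (V.mulVec (stdBasis i))
        (V.mulVec (((Real.sqrt 2 : ℂ))⁻¹ • (stdBasis i + stdBasis j)))
      ≠ chordalSq (stdBasis i)
        (((Real.sqrt 2 : ℂ))⁻¹ • (stdBasis i + stdBasis j)) := by
  set s : ℂ := ((Real.sqrt 2 : ℂ))⁻¹ with hs
  set a : ℝ := nsq (V.mulVec (stdBasis i)) with haa
  set b : ℝ := nsq (V.mulVec (stdBasis j)) with hbb
  have ha : 0 < a := nsq_pos _ (inj V hrank _ (std_ne i))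
  have hb : 0 < b := nsq_pos _ (inj V hrank _ (std_ne j))
  have hGii : (Vᴴ*V) i i = (a : ℂ) := G_diag_real V i
  have hGjj : (Vᴴ*V) j j = (b : ℂ) := G_diag_real V j
  have hGij : (Vᴴ*V) i j = 0 := hdiag hij
  have hGji : (Vᴴ*V) j i = 0 := hdiag hij.symm
  have hab : a ≠ b := by
    intro h; exact hne (by rw [hGii, hGjj, h])
  have hcs : (starRingEnd ℂ) s = s := by
    rw [hs, s_facts]; exact Complex.conj_ofReal _
  have hss : s * s = ((1/2 : ℝ) : ℂ) := by
    rw [hs, ← Complex.ofReal_inv, ← Complex.ofReal_mul, ← mul_inv,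
      Real.mul_self_sqrt (by norm_num)]
    norm_num
  -- inner products
  have e1 : star (stdBasis i) ⬝ᵥ (s • (stdBasis i + stdBasis j)) = s := by
    rw [star_std]
    simp [dotProduct_smul, dotProduct_add, std_dot, _root_.stdBasis,
      Pi.single_apply, hij.symm]
  have e2 : nsq (s • (stdBasis i + stdBasis j)) = 1 := by
    rw [nsq_smul, normSq_s]
    have : nsq (stdBasis i + stdBasis j) = 2 := by
      rw [nsq, star_add, add_dotProduct, dotProduct_add, dotProduct_add,
        std_dot_std hij, std_dot_std hij.symm, star_dot_self, star_dot_self,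
        nsq_std, nsq_std]
      norm_num
    rw [this]
    norm_num
  have e3 : star (V.mulVec (stdBasis i)) ⬝ᵥ V.mulVec (s • (stdBasis i + stdBasis j))
      = s * (a : ℂ) := by
    rw [key, star_std]
    rw [Matrix.mulVec_smul, Matrix.mulVec_add, std_dot]
    simp only [Pi.smul_apply, Pi.add_apply, mulVec_std, hGii, hGij, smul_eq_mul]
    ring
  have e4 : nsq (V.mulVec (s • (stdBasis i + stdBasis j))) = (a + b)/2 := by
    rw [Matrix.mulVec_smul, nsq_smul, normSq_s]
    have : nsq (V.mulVec (stdBasis i + stdBasis j)) = a + b := by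
      rw [nsq, key, star_add, Matrix.mulVec_add, add_dotProduct, dotProduct_add,
        dotProduct_add, star_std, star_std, std_dot, std_dot, std_dot, std_dot]
      simp only [Pi.add_apply, mulVec_std, hGii, hGjj, hGij, hGji]
      push_cast
      simp
    rw [this]
    ring
  -- put together
  rw [chordalSq, chordalSq, e1, e2, e3, e4, nsq_std, nsq_V_std, hGii]
  rw [Complex.sq_norm, Complex.sq_norm, Complex.normSq_mul]
  have hns : Complex.normSq s = 1/2 := normSq_s
  rw [hns, Complex.normSq_ofReal, Complex.ofReal_re]
  intro h
  have haz : a ≠ 0 := ne_of_gt ha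
  have habz : a + b ≠ 0 := by positivity
  field_simp at h
  apply hab
  nlinarith

lemma b2_ne {K : ℕ} {i j : Fin K} (hij : i ≠ j) :
    ((Real.sqrt 2 : ℂ))⁻¹ • (stdBasis i + stdBasis j) ≠ 0 := by
  intro h
  have h2 : (Real.sqrt 2 : ℂ) ≠ 0 := by
    simp [Real.sqrt_eq_zero']
  have := congrFun h i
  simp only [Pi.smul_apply, Pi.add_apply, _root_.stdBasis, Pi.single_apply,
    Pi.zero_apply, smul_eq_mul] at this
  rw [if_neg hij] at this
  simp [h2] at this

/-- Converse direction of the isometry lemma: if `Vᴴ V` is not a positive multiple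
of the identity, the chordal distance is not preserved; with specific witnesses. -/
theorem chordal_non_isometry_of_not_scaled_identity {N K : ℕ}
    (V : Matrix (Fin N) (Fin K) ℂ) (hrank : V.rank = K)
    (hnot : ¬ ∃ c : ℝ, 0 < c ∧ Vᴴ * V = (c : ℂ) • 1) :
    (∃ b₁ b₂ : Fin K → ℂ, b₁ ≠ 0 ∧ b₂ ≠ 0 ∧
        chordalSq (V.mulVec b₁) (V.mulVec b₂) ≠ chordalSq b₁ b₂) ∧
    (∀ i j : Fin K, i ≠ j → (Vᴴ * V) i j ≠ 0 →
        chordalSq (stdBasis i) (stdBasis j) = 1 ∧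
        chordalSq (V.mulVec (stdBasis i)) (V.mulVec (stdBasis j)) < 1) ∧
    (∀ i j : Fin K, i ≠ j → (Vᴴ * V).IsDiag → (Vᴴ * V) i i ≠ (Vᴴ * V) j j →
        chordalSq (V.mulVec (stdBasis i))
            (V.mulVec (((Real.sqrt 2 : ℂ))⁻¹ • (stdBasis i + stdBasis j)))
          ≠ chordalSq (stdBasis i)
            (((Real.sqrt 2 : ℂ))⁻¹ • (stdBasis i + stdBasis j))) := by
  refine ⟨?_, fun i j hij hG => ⟨chordal_std_std hij, part2 V hrank i j hG⟩,
    fun i j hij hd hne => part3 V hrank i j hij hd hne⟩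
  by_cases hd : (Vᴴ * V).IsDiag
  · have hex : ∃ i j : Fin K, i ≠ j ∧ (Vᴴ*V) i i ≠ (Vᴴ*V) j j := by
      by_contra hc
      push_neg at hc
      apply hnot
      rcases Nat.eq_zero_or_pos K with h0 | hK
      · subst h0
        exact ⟨1, one_pos, by ext i j; exact i.elim0⟩
      · set i0 : Fin K := ⟨0, hK⟩
        refine ⟨nsq (V.mulVec (stdBasis i0)),
          nsq_pos _ (inj V hrank _ (std_ne i0)), ?_⟩
        have hdiagc : ∀ i : Fin K, (Vᴴ*V) i i = (Vᴴ*V) i0 i0 := by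
          intro i
          by_cases h : i = i0
          · rw [h]
          · exact hc i i0 h
        ext i j
        by_cases h : i = j
        · subst h
          rw [hdiagc i, G_diag_real V i0]
          simp [Matrix.one_apply]
        · rw [hd h]
          simp [Matrix.one_apply, h]
    obtain ⟨i, j, hij, hne⟩ := hex
    exact ⟨stdBasis i, ((Real.sqrt 2 : ℂ))⁻¹ • (stdBasis i + stdBasis j),
      std_ne i, b2_ne hij, part3 V hrank i j hij hd hne⟩
  · have hex : ∃ i j : Fin K, i ≠ j ∧ (Vᴴ*V) i j ≠ 0 := by
      by_contra hc
      push_neg at hc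
      exact hd fun i j h => hc i j h
    obtain ⟨i, j, hij, hG⟩ := hex
    refine ⟨stdBasis i, stdBasis j, std_ne i, std_ne j, ?_⟩
    rw [chordal_std_std hij]
    exact ne_of_lt (part2 V hrank i j hG)
end

section
/- (Upper bound of Corollary 1) Let W ∈ C^{N×K} have orthonormal columns, B a finite set of unit vectors in C^K, and H = {W b̂ : b̂ ∈ B}. Define D_B = E_h[ min_{b̂∈B} d²(W^H h, b̂) ]. Then the overall distortion satisfies D_H ≤ D_B + d_p(W, R̃), where D_H = E_h[min_{ĥ∈H} d²(h,ĥ)] and d_p(W,R̃) = 1 − Tr(W W^H R̃) with R̃ = E_h[h h^H/‖h‖²]. -/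
open Matrix MeasureTheory

/-- Covariance of the normalized directions `h/‖h‖` under the distribution `μ`. -/
noncomputable def dirCov {N : ℕ} (μ : Measure (Fin N → ℂ)) :
    Matrix (Fin N) (Fin N) ℂ :=
  Matrix.of fun i j => ∫ h, h i * star (h j) / (nsq h : ℂ) ∂μ

lemma nsq_eq_sum {n : ℕ} (x : Fin n → ℂ) : nsq x = ∑ i, Complex.normSq (x i) := by
  simp [nsq, dotProduct, Complex.re_sum, Complex.normSq_apply]

lemma nsq_nonneg {n : ℕ} (x : Fin n → ℂ) : 0 ≤ nsq x := by
  rw [nsq_eq_sum]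
  exact Finset.sum_nonneg fun i _ => Complex.normSq_nonneg _

lemma nsq_eq_zero {n : ℕ} {x : Fin n → ℂ} : nsq x = 0 ↔ x = 0 := by
  rw [nsq_eq_sum]
  constructor
  · intro h
    funext i
    have := (Finset.sum_eq_zero_iff_of_nonneg (fun i _ => Complex.normSq_nonneg (x i))).1 h i (Finset.mem_univ i)
    simpa using Complex.normSq_eq_zero.1 this
  · intro h; simp [h]

lemma dot_adj {N K : ℕ} (A : Matrix (Fin N) (Fin K) ℂ) (x : Fin N → ℂ) (y : Fin K → ℂ) :
    star x ⬝ᵥ A.mulVec y = star (Aᴴ.mulVec x) ⬝ᵥ y := by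
  rw [star_mulVec, conjTranspose_conjTranspose, dotProduct_mulVec]

lemma nsq_eq_norm_sq {n : ℕ} (z : EuclideanSpace ℂ (Fin n)) : nsq z = ‖z‖ ^ 2 := by
  have h1z : (inner ℂ z z : ℂ) = star z ⬝ᵥ z := by
    simp [PiLp.inner_apply, dotProduct, mul_comm, RCLike.inner_apply, -inner_self_eq_norm_sq_to_K]
  rw [← @inner_self_eq_norm_sq ℂ, h1z, nsq, RCLike.re_eq_complex_re]

lemma cs {n : ℕ} (x y : Fin n → ℂ) :
    (‖star x ⬝ᵥ y‖) ^ 2 ≤ nsq x * nsq y := by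
  let x' : EuclideanSpace ℂ (Fin n) := WithLp.toLp 2 x
  let y' : EuclideanSpace ℂ (Fin n) := WithLp.toLp 2 y
  have h1 : (inner ℂ x' y' : ℂ) = star x ⬝ᵥ y := by
    simp [x', y', PiLp.inner_apply, dotProduct, mul_comm, RCLike.inner_apply]
  have h3 := norm_inner_le_norm (𝕜 := ℂ) x' y'
  rw [h1] at h3
  have h4 : ‖star x ⬝ᵥ y‖ = ‖(star x ⬝ᵥ y : ℂ)‖ := rfl
  have hx : nsq x = ‖x'‖ ^ 2 := nsq_eq_norm_sq x'
  have hy : nsq y = ‖y'‖ ^ 2 := nsq_eq_norm_sq y'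
  rw [hx, hy, h4]
  calc ‖(star x ⬝ᵥ y : ℂ)‖ ^ 2 ≤ (‖x'‖ * ‖y'‖) ^ 2 := by
        apply pow_le_pow_left₀ (norm_nonneg _) h3
    _ = ‖x'‖^2 * ‖y'‖^2 := by ring

lemma dotP {N K : ℕ} (W : Matrix (Fin N) (Fin K) ℂ) (h : Fin N → ℂ) :
    star h ⬝ᵥ (W * Wᴴ).mulVec h = star (Wᴴ.mulVec h) ⬝ᵥ (Wᴴ.mulVec h) := by
  rw [← mulVec_mulVec, dot_adj]

lemma star_mulVec_dot {N : ℕ} (P : Matrix (Fin N) (Fin N) ℂ) (hPH : Pᴴ = P)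
    (h z : Fin N → ℂ) : star (P.mulVec h) ⬝ᵥ z = star h ⬝ᵥ P.mulVec z := by
  have := dot_adj Pᴴ h z
  rw [conjTranspose_conjTranspose] at this
  rw [← this, hPH]

lemma nsq_proj_le {N K : ℕ} (W : Matrix (Fin N) (Fin K) ℂ) (hW : Wᴴ * W = 1)
    (h : Fin N → ℂ) : nsq (Wᴴ.mulVec h) ≤ nsq h := by
  set P := W * Wᴴ with hP
  have hPH : Pᴴ = P := by rw [hP, conjTranspose_mul, conjTranspose_conjTranspose]
  have hPP : P * P = P := by
    rw [hP, Matrix.mul_assoc W Wᴴ (W * Wᴴ), ← Matrix.mul_assoc Wᴴ W Wᴴ, hW, Matrix.one_mul]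
  have expand : star (h - P.mulVec h) ⬝ᵥ (h - P.mulVec h)
      = star h ⬝ᵥ h - star h ⬝ᵥ P.mulVec h := by
    have e1 : star (P.mulVec h) ⬝ᵥ h = star h ⬝ᵥ P.mulVec h :=
      star_mulVec_dot P hPH h h
    have e2 : star (P.mulVec h) ⬝ᵥ P.mulVec h = star h ⬝ᵥ P.mulVec h := by
      rw [star_mulVec_dot P hPH, mulVec_mulVec, hPP]
    rw [star_sub, sub_dotProduct, dotProduct_sub, dotProduct_sub, e1, e2]
    ring
  have key : nsq (h - P.mulVec h) = nsq h - nsq (Wᴴ.mulVec h) := by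
    rw [nsq, expand, Complex.sub_re, hP, dotP W h]; rfl
  have := nsq_nonneg (h - P.mulVec h)
  rw [key] at this
  linarith

lemma nsq_W_mulVec {N K : ℕ} (W : Matrix (Fin N) (Fin K) ℂ) (hW : Wᴴ * W = 1)
    (b : Fin K → ℂ) : nsq (W.mulVec b) = nsq b := by
  rw [nsq, dot_adj, mulVec_mulVec, hW, one_mulVec]; rfl

lemma chordalSq_le_one {n : ℕ} (x y : Fin n → ℂ) : chordalSq x y ≤ 1 := by
  have : (0:ℝ) ≤ (‖star x ⬝ᵥ y‖) ^ 2 / (nsq x * nsq y) := by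
    apply div_nonneg (by positivity) (mul_nonneg (nsq_nonneg x) (nsq_nonneg y))
  unfold chordalSq; linarith

lemma chordalSq_nonneg {n : ℕ} (x y : Fin n → ℂ) : 0 ≤ chordalSq x y := by
  unfold chordalSq
  rcases eq_or_lt_of_le (mul_nonneg (nsq_nonneg x) (nsq_nonneg y)) with h | h
  · rw [← h, div_zero]; norm_num
  · have := cs x y
    have : (‖star x ⬝ᵥ y‖) ^ 2 / (nsq x * nsq y) ≤ 1 :=
      (div_le_one h).2 this
    linarith

lemma pointwise_bound {N K : ℕ} (W : Matrix (Fin N) (Fin K) ℂ) (hW : Wᴴ * W = 1)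
    (h : Fin N → ℂ) (hh : h ≠ 0) (hg : Wᴴ.mulVec h ≠ 0)
    (b : Fin K → ℂ) (hb : nsq b = 1) :
    chordalSq h (W.mulVec b)
      ≤ chordalSq (Wᴴ.mulVec h) b + (1 - nsq (Wᴴ.mulVec h) / nsq h) := by
  set g := Wᴴ.mulVec h with hgdef
  set H := nsq h with hH
  set G := nsq g with hG
  have hHpos : 0 < H := lt_of_le_of_ne (nsq_nonneg h) fun e => hh (nsq_eq_zero.1 e.symm)
  have hGpos : 0 < G := lt_of_le_of_ne (nsq_nonneg g) fun e => hg (nsq_eq_zero.1 e.symm)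
  have hGH : G ≤ H := nsq_proj_le W hW h
  set a := (‖star g ⬝ᵥ b‖) ^ 2 with ha
  have haG : a ≤ G := by
    have := cs g b
    rw [hb, mul_one] at this
    exact this
  have ha0 : 0 ≤ a := by positivity
  have hdot : star h ⬝ᵥ W.mulVec b = star g ⬝ᵥ b := dot_adj W h b
  have e1 : chordalSq h (W.mulVec b) = 1 - a / H := by
    rw [chordalSq, hdot, nsq_W_mulVec W hW b, hb, mul_one]
  have e2 : chordalSq g b = 1 - a / G := by
    rw [chordalSq, hb, mul_one]
  rw [e1, e2, ← sub_nonneg]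
  have e3 : 1 - a / G + (1 - G / H) - (1 - a / H) = ((G - a) * (H - G) + a*0) / (G * H) := by
    field_simp
    ring
  rw [e3]
  apply div_nonneg _ (by positivity)
  nlinarith

lemma measurable_nsq {n : ℕ} : Measurable (nsq : (Fin n → ℂ) → ℝ) := by
  have e : (nsq : (Fin n → ℂ) → ℝ) = fun x => ∑ i, Complex.normSq (x i) := funext nsq_eq_sum
  rw [e]
  exact Finset.measurable_sum _ fun i _ =>
    Complex.continuous_normSq.measurable.comp (measurable_pi_apply i)

lemma measurable_mulVec {N K : ℕ} (A : Matrix (Fin K) (Fin N) ℂ) :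
    Measurable fun h : Fin N → ℂ => A.mulVec h := by
  apply measurable_pi_lambda
  intro i
  simp only [mulVec, dotProduct]
  exact Finset.measurable_sum _ fun j _ =>
    (measurable_const.mul (measurable_pi_apply j))

lemma measurable_dot_left {n : ℕ} (y : Fin n → ℂ) :
    Measurable fun x : Fin n → ℂ => star x ⬝ᵥ y := by
  simp only [dotProduct, Pi.star_apply]
  exact Finset.measurable_sum _ fun j _ =>
    ((continuous_star.measurable.comp (measurable_pi_apply (X := fun _ => ℂ) j)).mul_const _)

lemma measurable_chordal_left {n : ℕ} (y : Fin n → ℂ) :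
    Measurable fun x : Fin n → ℂ => chordalSq x y := by
  simp only [chordalSq]
  apply Measurable.sub measurable_const
  apply Measurable.div
  · exact ((continuous_norm.measurable).comp (measurable_dot_left y)).pow_const 2
  · exact measurable_nsq.mul measurable_const

lemma measurable_finset_inf' {ι : Type*} {α : Type*} [MeasurableSpace α]
    (B : Finset ι) (hne : B.Nonempty) (F : ι → α → ℝ)
    (hF : ∀ b, Measurable (F b)) :
    Measurable fun a => B.inf' hne fun b => F b a := by
  induction hne using Finset.Nonempty.cons_induction with
  | singleton a => simp only [Finset.inf'_singleton]; exact hF a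
  | cons a s ha hs ih =>
    have e : (fun x => (Finset.cons a s ha).inf' (Finset.cons_nonempty ha) fun b => F b x)
        = fun x => F a x ⊓ s.inf' hs fun b => F b x := by
      funext x; exact Finset.inf'_cons hs (fun b => F b x)
    rw [e]
    exact (hF a).inf ih

lemma integrable_of_bounded {α : Type*} [MeasurableSpace α] {μ : MeasureTheory.Measure α}
    [MeasureTheory.IsFiniteMeasure μ] {E : Type*} [NormedAddCommGroup E]
    {f : α → E} (hm : MeasureTheory.AEStronglyMeasurable f μ) (C : ℝ) (hb : ∀ x, ‖f x‖ ≤ C) :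
    MeasureTheory.Integrable f μ :=
  (MeasureTheory.integrable_const C).mono' hm (Filter.Eventually.of_forall hb)

lemma normSq_le_nsq {N : ℕ} (i : Fin N) (h : Fin N → ℂ) : ‖h i‖ ^ 2 ≤ nsq h := by
  have h1 : Complex.normSq (h i) ≤ nsq h := by
    rw [nsq_eq_sum]
    exact Finset.single_le_sum (f := fun k => Complex.normSq (h k))
      (fun k _ => Complex.normSq_nonneg _) (Finset.mem_univ i)
  calc ‖h i‖ ^ 2 = Complex.normSq (h i) := by rw [Complex.sq_norm]
    _ ≤ nsq h := h1

lemma entry_bound {N : ℕ} (i j : Fin N) (h : Fin N → ℂ) :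
    ‖h i * star (h j) / (nsq h : ℂ)‖ ≤ 1 := by
  rw [norm_div, norm_mul, norm_star]
  have hi := normSq_le_nsq i h
  have hj := normSq_le_nsq j h
  have hS : ‖((nsq h : ℝ) : ℂ)‖ = nsq h := by
    rw [Complex.norm_real, Real.norm_eq_abs, abs_of_nonneg (nsq_nonneg h)]
  rw [hS]
  rcases eq_or_lt_of_le (nsq_nonneg h) with h0 | h0
  · rw [← h0, div_zero]; norm_num
  · rw [div_le_one h0]
    nlinarith [norm_nonneg (h i), norm_nonneg (h j), sq_nonneg (‖h i‖ - ‖h j‖)]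
lemma measurable_entry {N : ℕ} (i j : Fin N) :
    Measurable fun h : Fin N → ℂ => h i * star (h j) / (nsq h : ℂ) := by
  apply Measurable.div
  · exact (measurable_pi_apply i).mul (continuous_star.measurable.comp (measurable_pi_apply j))
  · exact Complex.measurable_ofReal.comp measurable_nsq

lemma integrable_entry {N : ℕ} (μ : Measure (Fin N → ℂ)) [IsProbabilityMeasure μ]
    (i j : Fin N) :
    Integrable (fun h : Fin N → ℂ => h i * star (h j) / (nsq h : ℂ)) μ :=
  integrable_of_bounded (measurable_entry i j).aestronglyMeasurable 1 (entry_bound i j)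

lemma trace_eq {N K : ℕ} (μ : Measure (Fin N → ℂ)) [IsProbabilityMeasure μ]
    (W : Matrix (Fin N) (Fin K) ℂ) :
    ((W * Wᴴ * dirCov μ).trace).re = ∫ h, nsq (Wᴴ.mulVec h) / nsq h ∂μ := by
  set P := W * Wᴴ with hP
  have hint : ∀ i j : Fin N,
      Integrable (fun h : Fin N → ℂ => P i j * (h j * star (h i) / (nsq h : ℂ))) μ :=
    fun i j => (integrable_entry μ j i).const_mul _
  have h1 : (P * dirCov μ).trace
      = ∑ i, ∑ j, ∫ h, P i j * (h j * star (h i) / (nsq h : ℂ)) ∂μ := by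
    rw [Matrix.trace]
    apply Finset.sum_congr rfl
    intro i _
    rw [Matrix.diag_apply, Matrix.mul_apply]
    apply Finset.sum_congr rfl
    intro j _
    rw [dirCov, Matrix.of_apply, integral_const_mul]
  have key : ∀ h : Fin N → ℂ, ∑ i, ∑ j, P i j * (h j * star (h i) / (nsq h : ℂ))
      = (star h ⬝ᵥ P.mulVec h) / (nsq h : ℂ) := by
    intro h
    simp only [dotProduct, Pi.star_apply, mulVec, Finset.sum_div, Finset.mul_sum]
    refine Finset.sum_congr rfl fun i _ => Finset.sum_congr rfl fun j _ => by ring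
  have h2 : (P * dirCov μ).trace
      = ∫ h, (star h ⬝ᵥ P.mulVec h) / (nsq h : ℂ) ∂μ := by
    rw [h1]
    calc ∑ i, ∑ j, ∫ h, P i j * (h j * star (h i) / (nsq h : ℂ)) ∂μ
        = ∑ i, ∫ h, ∑ j, P i j * (h j * star (h i) / (nsq h : ℂ)) ∂μ :=
          Finset.sum_congr rfl fun i _ => (integral_finset_sum _ fun j _ => hint i j).symm
      _ = ∫ h, ∑ i, ∑ j, P i j * (h j * star (h i) / (nsq h : ℂ)) ∂μ :=
          (integral_finset_sum _ fun i _ =>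
            integrable_finset_sum _ fun j _ => hint i j).symm
      _ = ∫ h, (star h ⬝ᵥ P.mulVec h) / (nsq h : ℂ) ∂μ :=
          integral_congr_ae (Filter.Eventually.of_forall fun h => key h)
  have hint2 : Integrable (fun h => (star h ⬝ᵥ P.mulVec h) / (nsq h : ℂ)) μ := by
    apply (integrable_finset_sum Finset.univ fun i (_ : i ∈ Finset.univ) =>
      integrable_finset_sum Finset.univ fun j _ => hint i j).congr
    exact Filter.Eventually.of_forall fun h => key h
  rw [h2]
  have h3 := integral_re (𝕜 := ℂ) hint2
  simp only [RCLike.re_to_complex] at h3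
  rw [← h3]
  apply integral_congr_ae
  filter_upwards with h
  show ((star h ⬝ᵥ P.mulVec h) / (nsq h : ℂ)).re = nsq (Wᴴ.mulVec h) / nsq h
  rw [Complex.div_ofReal_re, hP, dotP]
  rfl

/-- Upper bound of Corollary 1: for the induced codebook `H = W B`, the overall
distortion is at most the subband distortion `D_B` plus the projection
distortion `d_p(W,R̃)`. -/
theorem distortion_upper_bound {N K : ℕ}
    (μ : Measure (Fin N → ℂ)) [IsProbabilityMeasure μ]
    (W : Matrix (Fin N) (Fin K) ℂ) (hW : Wᴴ * W = 1)
    (B : Finset (Fin K → ℂ)) (hne : B.Nonempty)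
    (hcode : ∀ b ∈ B, nsq b = 1)
    (hnz : ∀ᵐ h ∂μ, h ≠ 0 ∧ Wᴴ.mulVec h ≠ 0) :
    (∫ h, B.inf' hne (fun b => chordalSq h (W.mulVec b)) ∂μ)
      ≤ (∫ h, B.inf' hne (fun b => chordalSq (Wᴴ.mulVec h) b) ∂μ)
        + (1 - ((W * Wᴴ * dirCov μ).trace).re) := by
  classical
  set f : (Fin N → ℂ) → ℝ := fun h => B.inf' hne fun b => chordalSq h (W.mulVec b) with hf
  set g : (Fin N → ℂ) → ℝ := fun h => B.inf' hne fun b => chordalSq (Wᴴ.mulVec h) b with hg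
  set r : (Fin N → ℂ) → ℝ := fun h => nsq (Wᴴ.mulVec h) / nsq h with hr
  have hfm : Measurable f :=
    measurable_finset_inf' B hne _ fun b => measurable_chordal_left (W.mulVec b)
  have hgm : Measurable g :=
    measurable_finset_inf' B hne (fun b h => chordalSq (Wᴴ.mulVec h) b)
      fun b => (measurable_chordal_left b).comp (measurable_mulVec Wᴴ)
  have hrm : Measurable r :=
    (measurable_nsq.comp (measurable_mulVec Wᴴ)).div measurable_nsq
  have hfb : ∀ h, ‖f h‖ ≤ 1 := by
    intro h
    rw [Real.norm_eq_abs, abs_le]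
    constructor
    · have : (0:ℝ) ≤ f h := Finset.le_inf' hne _ fun b _ => chordalSq_nonneg _ _
      linarith
    · obtain ⟨b, hbB⟩ := hne
      exact le_trans (Finset.inf'_le _ hbB) (chordalSq_le_one _ _)
  have hgb : ∀ h, ‖g h‖ ≤ 1 := by
    intro h
    rw [Real.norm_eq_abs, abs_le]
    constructor
    · have : (0:ℝ) ≤ g h := Finset.le_inf' hne _ fun b _ => chordalSq_nonneg _ _
      linarith
    · obtain ⟨b, hbB⟩ := hne
      exact le_trans (Finset.inf'_le _ hbB) (chordalSq_le_one _ _)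
  have hrb : ∀ h, ‖r h‖ ≤ 1 := by
    intro h
    rw [Real.norm_eq_abs, abs_le]
    have h1 : (0:ℝ) ≤ r h := div_nonneg (nsq_nonneg _) (nsq_nonneg _)
    constructor
    · linarith
    · rcases eq_or_lt_of_le (nsq_nonneg h) with h0 | h0
      · have : h = 0 := nsq_eq_zero.1 h0.symm
        simp [hr, this, nsq_eq_zero.2]
      · exact div_le_one_of_le₀ (nsq_proj_le W hW h) (le_of_lt h0)
  have hfi : Integrable f μ := integrable_of_bounded hfm.aestronglyMeasurable 1 hfb
  have hgi : Integrable g μ := integrable_of_bounded hgm.aestronglyMeasurable 1 hgb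
  have hri : Integrable r μ := integrable_of_bounded hrm.aestronglyMeasurable 1 hrb
  have hpt : ∀ᵐ h ∂μ, f h ≤ g h + (1 - r h) := by
    filter_upwards [hnz] with h hh
    obtain ⟨h0, hg0⟩ := hh
    obtain ⟨b, hbB, hbeq⟩ := Finset.exists_mem_eq_inf' hne fun b => chordalSq (Wᴴ.mulVec h) b
    calc f h ≤ chordalSq h (W.mulVec b) := Finset.inf'_le _ hbB
      _ ≤ chordalSq (Wᴴ.mulVec h) b + (1 - nsq (Wᴴ.mulVec h) / nsq h) :=
          pointwise_bound W hW h h0 hg0 b (hcode b hbB)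
      _ = g h + (1 - r h) := by simp only [hg, hr]; rw [hbeq]
  calc (∫ h, f h ∂μ) ≤ ∫ h, (g h + (1 - r h)) ∂μ :=
        integral_mono_ae hfi (hgi.add ((integrable_const 1).sub hri)) hpt
    _ = (∫ h, g h ∂μ) + ∫ h, (1 - r h) ∂μ :=
        integral_add hgi ((integrable_const 1).sub hri)
    _ = (∫ h, g h ∂μ) + (1 - ∫ h, r h ∂μ) := by
        rw [integral_sub (integrable_const 1) hri, integral_const]
        simp
    _ = (∫ h, g h ∂μ) + (1 - ((W * Wᴴ * dirCov μ).trace).re) := by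
        rw [trace_eq μ W]
end
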